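/- arXiv:2108.05310 — 5 statements merged into one kernel-verified Lean document; each statement's English description precedes it below -/
import Mathlib

section
/- Let I ⊆ ℝ be open, let Π : I → ℝ^m be n-times continuously differentiable, and let S be a constant m×m real matrix. Suppose that Π(t)ᵀ S Π^{(j)}(t) = 0 for all t ∈ I and all 0 ≤ j ≤ n−1. Then for every 0 ≤ k ≤ n and all t ∈ I: Π^{(k)}(t)ᵀ S Π^{(n−k)}(t) = (−1)^k · Π(t)ᵀ S Π^{(n)}(t). -/
open Matrix

private lemma iterDW_of_isOpen {f : ℝ → ℝ} {s : Set ℝ} {x : ℝ} (k : ℕ)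
    (hs : IsOpen s) (hx : x ∈ s) :
    iteratedDerivWithin k f s x = iteratedDeriv k f x := by
  simp only [iteratedDerivWithin, iteratedDeriv]
  rw [iteratedFDerivWithin_of_isOpen k hs hx]

/-- Griffiths-transversality consequence: if the `n`-times continuously differentiable
vector-valued function `Π : I → ℝ^m` pairs to zero (via the constant matrix `S`) with
all its derivatives of order `0 ≤ j ≤ n−1` on the open set `I`, then for every
`0 ≤ k ≤ n` and `t ∈ I`:
`Π^{(k)}(t)ᵀ S Π^{(n−k)}(t) = (−1)^k · Π(t)ᵀ S Π^{(n)}(t)`. -/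
theorem antidiagonal_pairings_eq
    (m n : ℕ) (I : Set ℝ) (hI : IsOpen I)
    (P : ℝ → Fin m → ℝ) (S : Matrix (Fin m) (Fin m) ℝ)
    (hsmooth : ∀ a, ContDiffOn ℝ n (fun t => P t a) I)
    (hvanish : ∀ t ∈ I, ∀ j < n,
      dotProduct (P t) (S.mulVec fun b => iteratedDeriv j (fun s => P s b) t) = 0) :
    ∀ k ≤ n, ∀ t ∈ I,
      dotProduct (fun a => iteratedDeriv k (fun s => P s a) t)
          (S.mulVec fun b => iteratedDeriv (n - k) (fun s => P s b) t)
        = (-1 : ℝ) ^ k *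
            dotProduct (P t) (S.mulVec fun b => iteratedDeriv n (fun s => P s b) t) := by
  set g : Fin m → ℝ → ℝ := fun a s => P s a with hg
  -- each iterated derivative of order < n is differentiable on I
  have hd : ∀ (a : Fin m) (k : ℕ), k < n → ∀ t ∈ I,
      HasDerivAt (iteratedDeriv k (g a)) (iteratedDeriv (k + 1) (g a) t) t := by
    intro a k hk t ht
    have h1 : DifferentiableWithinAt ℝ (iteratedDerivWithin k (g a) I) I t :=
      ((hsmooth a).differentiableOn_iteratedDerivWithin
        (by exact_mod_cast hk) hI.uniqueDiffOn) t ht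
    have heq : iteratedDerivWithin k (g a) I =ᶠ[nhds t] iteratedDeriv k (g a) :=
      Filter.eventuallyEq_of_mem (hI.mem_nhds ht) (fun x hx => iterDW_of_isOpen k hI hx)
    have h2 : DifferentiableAt ℝ (iteratedDeriv k (g a)) t := by
      have := h1.differentiableAt (hI.mem_nhds ht)
      exact this.congr_of_eventuallyEq heq.symm
    have h3 := h2.hasDerivAt
    rwa [iteratedDeriv_succ]
  set F : ℕ → ℕ → ℝ → ℝ := fun j k t =>
    dotProduct (fun a => iteratedDeriv j (g a) t)
      (S.mulVec fun b => iteratedDeriv k (g b) t) with hF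
  -- Leibniz rule for F
  have hleib : ∀ j k : ℕ, j < n → k < n → ∀ t ∈ I,
      HasDerivAt (F j k) (F (j + 1) k t + F j (k + 1) t) t := by
    intro j k hj hk t ht
    have hFe : ∀ j' k' t', F j' k' t' =
        ∑ a : Fin m, iteratedDeriv j' (g a) t' *
          ∑ b : Fin m, S a b * iteratedDeriv k' (g b) t' := by
      intro j' k' t'
      simp [hF, dotProduct, Matrix.mulVec]
    have h : HasDerivAt (fun t' => ∑ a : Fin m, iteratedDeriv j (g a) t' *
          ∑ b : Fin m, S a b * iteratedDeriv k (g b) t')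
        (∑ a : Fin m,
          (iteratedDeriv (j + 1) (g a) t *
            ∑ b : Fin m, S a b * iteratedDeriv k (g b) t +
           iteratedDeriv j (g a) t *
            ∑ b : Fin m, S a b * iteratedDeriv (k + 1) (g b) t)) t := by
      apply HasDerivAt.fun_sum
      intro a _
      exact (hd a j hj t ht).mul
        (HasDerivAt.fun_sum fun b _ => (hd b k hk t ht).const_mul (S a b))
    have h2 : HasDerivAt (F j k)
        (∑ a : Fin m,
          (iteratedDeriv (j + 1) (g a) t *
            ∑ b : Fin m, S a b * iteratedDeriv k (g b) t +
           iteratedDeriv j (g a) t *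
            ∑ b : Fin m, S a b * iteratedDeriv (k + 1) (g b) t)) t := by
      refine h.congr_of_eventuallyEq ?_
      filter_upwards with x
      rw [hFe]
    have : F (j + 1) k t + F j (k + 1) t =
        ∑ a : Fin m,
          (iteratedDeriv (j + 1) (g a) t *
            ∑ b : Fin m, S a b * iteratedDeriv k (g b) t +
           iteratedDeriv j (g a) t *
            ∑ b : Fin m, S a b * iteratedDeriv (k + 1) (g b) t) := by
      rw [hFe, hFe, ← Finset.sum_add_distrib]
    rwa [this]
  -- hvanish restated: F 0 j = 0 on I for j < n
  have hvan : ∀ j < n, ∀ t ∈ I, F 0 j t = 0 := by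
    intro j hj t ht
    have := hvanish t ht j hj
    simpa [hF, hg, iteratedDeriv_zero] using this
  -- main induction
  have key : ∀ k j : ℕ, k + j ≤ n → ∀ t ∈ I, F k j t = (-1 : ℝ) ^ k * F 0 (k + j) t := by
    intro k
    induction k with
    | zero => intro j _ t _; simp
    | succ k ih =>
      intro j hkj t ht
      have hkn : k < n := by omega
      have hjn : j < n := by omega
      -- F k j = 0 on a neighborhood of t
      have hzero : ∀ s ∈ I, F k j s = 0 := by
        intro s hs
        rw [ih j (by omega) s hs, hvan (k + j) (by omega) s hs, mul_zero]
      have h1 : HasDerivAt (F k j) 0 t := by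
        have := hasDerivAt_const t (0 : ℝ)
        refine this.congr_of_eventuallyEq ?_
        exact Filter.eventuallyEq_of_mem (hI.mem_nhds ht) (fun x hx => hzero x hx)
      have h2 := hleib k j hkn hjn t ht
      have h3 : F (k + 1) j t + F k (j + 1) t = 0 := by
        have := h2.unique h1
        linarith [this]
      have h4 : F k (j + 1) t = (-1 : ℝ) ^ k * F 0 (k + (j + 1)) t :=
        ih (j + 1) (by omega) t ht
      have : F (k + 1) j t = -((-1 : ℝ) ^ k * F 0 (k + (j + 1)) t) := by
        rw [← h4]; linarith
      rw [this]
      have : k + (j + 1) = k + 1 + j := by omega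
      rw [this]
      ring
  intro k hk t ht
  have := key k (n - k) (by omega) t ht
  have hnk : k + (n - k) = n := by omega
  rw [hnk] at this
  simpa [hF, hg, iteratedDeriv_zero] using this
end

section
/- Let I ⊆ ℝ be open, Π : I → ℝ^m sufficiently differentiable, S an m×m real matrix with Sᵀ = (−1)^{l+1} S for some integer l ≥ 1, and suppose Π(t)ᵀ S Π^{(j)}(t) = 0 for all 0 ≤ j ≤ l−2 and t ∈ I. Define C(t) = Π(t)ᵀ S Π^{(l−1)}(t). Suppose moreover that Π satisfies the vector ODE Σ_{i=0}^{l} b_i(t) Π^{(i)}(t) = 0 componentwise, for functions b_i : I → ℝ. Then: (a) Π(t)ᵀ S Π^{(l)}(t) = (l/2)·C'(t), and (b) b_{l−1}(t) C(t) + (l/2) b_l(t) C'(t) = 0 for all t ∈ I. -/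
open Matrix

lemma hasDerivAt_iteratedDeriv_aux {f : ℝ → ℝ} {I : Set ℝ} (hI : IsOpen I)
    {n : ℕ} (hf : ContDiffOn ℝ n f I) {j : ℕ} (hj : j + 1 ≤ n)
    {t : ℝ} (ht : t ∈ I) :
    HasDerivAt (iteratedDeriv j f) (iteratedDeriv (j + 1) f t) t := by
  have heq : Set.EqOn (iteratedDerivWithin j f I) (iteratedDeriv j f) I := by
    intro x hx
    rw [iteratedDerivWithin_eq_iteratedFDerivWithin, iteratedDeriv_eq_iteratedFDeriv,
      iteratedFDerivWithin_of_isOpen j hI hx]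
  have hd : DifferentiableOn ℝ (iteratedDerivWithin j f I) I :=
    hf.differentiableOn_iteratedDerivWithin (by exact_mod_cast hj) hI.uniqueDiffOn
  have hdiff : DifferentiableAt ℝ (iteratedDeriv j f) t := by
    have := (hd t ht).differentiableAt (hI.mem_nhds ht)
    exact this.congr_of_eventuallyEq
      ((Filter.eventuallyEq_of_mem (hI.mem_nhds ht) heq).symm)
  simpa only [iteratedDeriv_succ] using hdiff.hasDerivAt

/-- Pairing `Π^{(j)ᵀ} S Π^{(k)}`. -/
noncomputable def pairQ (m : ℕ) (P : ℝ → Fin m → ℝ) (S : Matrix (Fin m) (Fin m) ℝ)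
    (j k : ℕ) (t : ℝ) : ℝ :=
  dotProduct (fun a => iteratedDeriv j (fun s => P s a) t)
    (S.mulVec fun a => iteratedDeriv k (fun s => P s a) t)

lemma pairQ_eq_sum (m : ℕ) (P : ℝ → Fin m → ℝ) (S : Matrix (Fin m) (Fin m) ℝ)
    (j k : ℕ) (t : ℝ) :
    pairQ m P S j k t = ∑ a : Fin m, ∑ c : Fin m,
      iteratedDeriv j (fun s => P s a) t * (S a c * iteratedDeriv k (fun s => P s c) t) := by
  simp [pairQ, dotProduct, mulVec, Finset.mul_sum]

lemma hasDerivAt_pairQ (m : ℕ) (I : Set ℝ) (hI : IsOpen I)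
    (P : ℝ → Fin m → ℝ) (S : Matrix (Fin m) (Fin m) ℝ)
    (n : ℕ) (hsmooth : ∀ a, ContDiffOn ℝ n (fun t => P t a) I)
    (j k : ℕ) (hj : j + 1 ≤ n) (hk : k + 1 ≤ n)
    (t : ℝ) (ht : t ∈ I) :
    HasDerivAt (pairQ m P S j k)
      (pairQ m P S (j + 1) k t + pairQ m P S j (k + 1) t) t := by
  have key : HasDerivAt (fun s => ∑ a : Fin m, ∑ c : Fin m,
      iteratedDeriv j (fun u => P u a) s * (S a c * iteratedDeriv k (fun u => P u c) s))
      (∑ a : Fin m, ∑ c : Fin m,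
        (iteratedDeriv (j+1) (fun u => P u a) t * (S a c * iteratedDeriv k (fun u => P u c) t)
        + iteratedDeriv j (fun u => P u a) t * (S a c * iteratedDeriv (k+1) (fun u => P u c) t))) t := by
    refine HasDerivAt.fun_sum fun a _ => HasDerivAt.fun_sum fun c _ => ?_
    exact (hasDerivAt_iteratedDeriv_aux hI (hsmooth a) hj ht).mul
      ((hasDerivAt_iteratedDeriv_aux hI (hsmooth c) hk ht).const_mul (S a c))
  have : (fun s => ∑ a : Fin m, ∑ c : Fin m,
      iteratedDeriv j (fun u => P u a) s * (S a c * iteratedDeriv k (fun u => P u c) s))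
      = pairQ m P S j k := by
    funext s; rw [pairQ_eq_sum]
  rw [this] at key
  convert key using 1
  rw [pairQ_eq_sum, pairQ_eq_sum, ← Finset.sum_add_distrib]
  exact Finset.sum_congr rfl fun a _ => (Finset.sum_add_distrib).symm

lemma pairQ_symm (m : ℕ) (P : ℝ → Fin m → ℝ) (S : Matrix (Fin m) (Fin m) ℝ)
    (c : ℝ) (hS : Sᵀ = c • S) (j k : ℕ) (t : ℝ) :
    pairQ m P S j k t = c * pairQ m P S k j t := by
  have hS' : ∀ a d, S d a = c * S a d := by
    intro a d
    have := congrFun (congrFun hS a) d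
    simpa [Matrix.transpose_apply] using this
  rw [pairQ_eq_sum, pairQ_eq_sum, Finset.mul_sum, Finset.sum_comm]
  refine Finset.sum_congr rfl fun a _ => ?_
  rw [Finset.mul_sum]
  refine Finset.sum_congr rfl fun d _ => ?_
  rw [hS' a d]; ring

lemma dot_mulVec_sum {m : ℕ} (v : Fin m → ℝ) (S : Matrix (Fin m) (Fin m) ℝ)
    {ι : Type*} (r : Finset ι) (g : ι → Fin m → ℝ) :
    dotProduct v (S.mulVec fun a => ∑ i ∈ r, g i a)
      = ∑ i ∈ r, dotProduct v (S.mulVec (g i)) := by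
  have h1 : (S.mulVec fun a => ∑ i ∈ r, g i a) = ∑ i ∈ r, S.mulVec (g i) := by
    have : (fun a => ∑ i ∈ r, g i a) = ∑ i ∈ r, g i := by
      funext a; simp
    rw [this]
    exact map_sum S.mulVecLin g r
  rw [h1]
  have : dotProduct v (∑ i ∈ r, S.mulVec (g i))
      = ∑ i ∈ r, dotProduct v (S.mulVec (g i)) := by
    simp [dotProduct, Finset.mul_sum]
    rw [Finset.sum_comm]
  exact this

lemma dot_mulVec_mul {m : ℕ} (v : Fin m → ℝ) (S : Matrix (Fin m) (Fin m) ℝ)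
    (c : ℝ) (w : Fin m → ℝ) :
    dotProduct v (S.mulVec fun a => c * w a) = c * dotProduct v (S.mulVec w) := by
  simp only [dotProduct, mulVec, Finset.mul_sum]
  refine Finset.sum_congr rfl fun a _ => ?_
  refine Finset.sum_congr rfl fun d _ => ?_
  ring



/-- Yukawa coupling ODE from Griffiths transversality. Let `Π : I → ℝ^m` be sufficiently
differentiable, `S` an `m×m` real matrix with `Sᵀ = (−1)^{l+1} S` (`l ≥ 1`), and suppose
`Π(t)ᵀ S Π^{(j)}(t) = 0` for `0 ≤ j ≤ l−2` on the open set `I`. Let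
`C(t) = Π(t)ᵀ S Π^{(l−1)}(t)` and suppose `∑_{i=0}^{l} b_i(t) Π^{(i)}(t) = 0`
componentwise on `I`. Then (a) `Π(t)ᵀ S Π^{(l)}(t) = (l/2)·C'(t)`, and
(b) `b_{l−1}(t) C(t) + (l/2) b_l(t) C'(t) = 0` on `I`. -/
theorem yukawa_coupling_ODE
    (m l : ℕ) (hl : 1 ≤ l) (I : Set ℝ) (hI : IsOpen I)
    (P : ℝ → Fin m → ℝ) (S : Matrix (Fin m) (Fin m) ℝ)
    (hS : Sᵀ = (-1 : ℝ) ^ (l + 1) • S)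
    (hsmooth : ∀ a, ContDiffOn ℝ (l + 1) (fun t => P t a) I)
    (hvanish : ∀ t ∈ I, ∀ j : ℕ, j + 2 ≤ l →
      dotProduct (P t) (S.mulVec fun b => iteratedDeriv j (fun s => P s b) t) = 0)
    (b : ℕ → ℝ → ℝ)
    (hODE : ∀ t ∈ I, ∀ a,
      ∑ i ∈ Finset.range (l + 1), b i t * iteratedDeriv i (fun s => P s a) t = 0)
    (C : ℝ → ℝ)
    (hC : ∀ t, C t
      = dotProduct (P t) (S.mulVec fun b => iteratedDeriv (l - 1) (fun s => P s b) t)) :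
    (∀ t ∈ I,
      dotProduct (P t) (S.mulVec fun b => iteratedDeriv l (fun s => P s b) t)
        = ((l : ℝ) / 2) * deriv C t) ∧
    (∀ t ∈ I, b (l - 1) t * C t + ((l : ℝ) / 2) * b l t * deriv C t = 0) := by
  obtain ⟨k, rfl⟩ : ∃ k, l = k + 1 := ⟨l - 1, by omega⟩
  -- the pairing in terms of pairQ
  have hQ0 : ∀ (t : ℝ) (j : ℕ),
      dotProduct (P t) (S.mulVec fun a => iteratedDeriv j (fun s => P s a) t)
        = pairQ m P S 0 j t := by
    intro t j; simp [pairQ, iteratedDeriv_zero]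
  have hC' : ∀ t : ℝ, C t = pairQ m P S 0 k t := by
    intro t
    have := (hC t).trans (hQ0 t (k + 1 - 1))
    simpa using this
  -- derivative of the pairing
  have hQd : ∀ j j' : ℕ, j ≤ k + 1 → j' ≤ k + 1 → ∀ t ∈ I,
      HasDerivAt (pairQ m P S j j')
        (pairQ m P S (j + 1) j' t + pairQ m P S j (j' + 1) t) t := by
    intro j j' hj hj' t ht
    refine hasDerivAt_pairQ m I hI P S (k + 2) (fun a => ?_) j j'
      (by omega) (by omega) t ht
    exact_mod_cast hsmooth a
  -- extended vanishing
  have hvan : ∀ j j' : ℕ, j + j' + 2 ≤ k + 1 → ∀ t ∈ I, pairQ m P S j j' t = 0 := by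
    intro j
    induction j with
    | zero =>
      intro j' hj' t ht
      rw [← hQ0 t j']
      exact hvanish t ht j' (by omega)
    | succ j ih =>
      intro j' hj' t ht
      have hd := hQd j j' (by omega) (by omega) t ht
      have h0 : HasDerivAt (pairQ m P S j j') 0 t := by
        refine (hasDerivAt_const t (0 : ℝ)).congr_of_eventuallyEq ?_
        exact Filter.eventuallyEq_of_mem (hI.mem_nhds ht)
          (fun s hs => ih j' (by omega) s hs)
      have huniq := hd.unique h0
      have hjk1 : pairQ m P S j (j' + 1) t = 0 := ih (j' + 1) (by omega) t ht
      linarith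
  -- antidiagonal
  have hanti : ∀ j j' : ℕ, j + j' + 1 = k + 1 → ∀ t ∈ I,
      pairQ m P S j j' t = (-1 : ℝ) ^ j * C t := by
    intro j
    induction j with
    | zero =>
      intro j' hj' t ht
      have hk : j' = k := by omega
      subst hk
      simp [← hC' t]
    | succ j ih =>
      intro j' hj' t ht
      have hd := hQd j j' (by omega) (by omega) t ht
      have h0 : HasDerivAt (pairQ m P S j j') 0 t := by
        refine (hasDerivAt_const t (0 : ℝ)).congr_of_eventuallyEq ?_
        exact Filter.eventuallyEq_of_mem (hI.mem_nhds ht)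
          (fun s hs => hvan j j' (by omega) s hs)
      have huniq := hd.unique h0
      have hih := ih (j' + 1) (by omega) t ht
      rw [hih] at huniq
      rw [pow_succ]
      linarith
  -- derivative of C
  have hCd : ∀ t ∈ I, HasDerivAt C
      (pairQ m P S 1 k t + pairQ m P S 0 (k + 1) t) t := by
    intro t ht
    have hd := hQd 0 k (by omega) (by omega) t ht
    have hfun : pairQ m P S 0 k = C := funext fun s => (hC' s).symm
    rwa [hfun] at hd
  -- differentiating the antidiagonal relation
  have hstep : ∀ j j' : ℕ, j + j' + 1 = k + 1 → ∀ t ∈ I,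
      pairQ m P S (j + 1) j' t + pairQ m P S j (j' + 1) t
        = (-1 : ℝ) ^ j * deriv C t := by
    intro j j' h t ht
    have hd := hQd j j' (by omega) (by omega) t ht
    have heqf : pairQ m P S j j' =ᶠ[nhds t] fun s => (-1 : ℝ) ^ j * C s :=
      Filter.eventuallyEq_of_mem (hI.mem_nhds ht) (fun s hs => hanti j j' h s hs)
    have h2 := hd.congr_of_eventuallyEq heqf.symm
    have h3 : HasDerivAt (fun s => (-1 : ℝ) ^ j * C s) ((-1 : ℝ) ^ j * deriv C t) t := by
      have := (hCd t ht).const_mul ((-1 : ℝ) ^ j)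
      rwa [(hCd t ht).deriv]
    exact h2.unique h3
  -- the recursion for the l-diagonal
  have hAform : ∀ j j' : ℕ, j + j' = k + 1 → ∀ t ∈ I,
      pairQ m P S j j' t
        = (-1 : ℝ) ^ j * (pairQ m P S 0 (k + 1) t - (j : ℝ) * deriv C t) := by
    intro j
    induction j with
    | zero =>
      intro j' h t ht
      have : j' = k + 1 := by omega
      subst this; simp
    | succ j ih =>
      intro j' h t ht
      have h1 := hstep j j' (by omega) t ht
      have h2 := ih (j' + 1) (by omega) t ht
      rw [h2] at h1
      push_cast
      linear_combination h1
  -- part (a)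
  have parta : ∀ t ∈ I,
      pairQ m P S 0 (k + 1) t = ((k : ℝ) + 1) / 2 * deriv C t := by
    intro t ht
    have hsymm := pairQ_symm m P S ((-1 : ℝ) ^ (k + 1 + 1)) hS 0 (k + 1) t
    have hAl := hAform (k + 1) 0 (by omega) t ht
    rw [hAl] at hsymm
    have hpow : ((-1 : ℝ)) ^ (k + 1 + 1) * (-1 : ℝ) ^ (k + 1) = -1 := by
      rw [← pow_add]
      have h2 : k + 1 + 1 + (k + 1) = 2 * (k + 1) + 1 := by omega
      rw [h2, pow_succ, pow_mul]
      norm_num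
    rw [← mul_assoc, hpow] at hsymm
    push_cast at hsymm ⊢
    linarith
  constructor
  · intro t ht
    rw [hQ0 t (k + 1), parta t ht]
    push_cast
    ring
  · intro t ht
    -- pairing the ODE with P via S
    have hsum : ∑ i ∈ Finset.range (k + 2), b i t * pairQ m P S 0 i t = 0 := by
      have h1 : (fun a => ∑ i ∈ Finset.range (k + 2),
          b i t * iteratedDeriv i (fun s => P s a) t) = fun _ => (0 : ℝ) :=
        funext fun a => hODE t ht a
      have h2 : dotProduct (P t) (S.mulVec fun a => ∑ i ∈ Finset.range (k + 2),
          b i t * iteratedDeriv i (fun s => P s a) t) = 0 := by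
        rw [h1]
        simp [Matrix.mulVec, dotProduct]
      rw [dot_mulVec_sum (P t) S (Finset.range (k + 2))
        (fun i a => b i t * iteratedDeriv i (fun s => P s a) t)] at h2
      rw [← h2]
      refine Finset.sum_congr rfl fun i _ => ?_
      rw [dot_mulVec_mul (P t) S (b i t) (fun a => iteratedDeriv i (fun s => P s a) t),
        hQ0 t i]
    rw [Finset.sum_range_succ, Finset.sum_range_succ] at hsum
    have hz : ∑ i ∈ Finset.range k, b i t * pairQ m P S 0 i t = 0 := by
      refine Finset.sum_eq_zero fun i hi => ?_
      have hik : i < k := Finset.mem_range.mp hi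
      rw [hvan 0 i (by omega) t ht, mul_zero]
    rw [hz, parta t ht, ← hC' t] at hsum
    have hgoal : b (k + 1 - 1) t = b k t := by norm_num
    rw [hgoal]
    push_cast
    linarith
end

section
/- Define a_n = Σ_{i+j+k=n, i,j,k ≥ 0} (n! / (i! j! k!))² for n ≥ 0 (so a₀ = 1, a₁ = 3, a₂ = 15). Then for every n ≥ 2 the Apéry-like recurrence n² a_n = (10n² − 10n + 3) a_{n−1} − 9(n−1)² a_{n−2} holds. -/
open scoped BigOperators
open Finset

/-- `a n = ∑_{i+j+k=n} (n!/(i!j!k!))²`, the sum of squares of trinomial coefficients. -/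
noncomputable def bananaApery (n : ℕ) : ℚ :=
  ∑ i ∈ Finset.range (n + 1), ∑ j ∈ Finset.range (n + 1 - i),
    ((n.factorial : ℚ) / ((i.factorial : ℚ) * (j.factorial : ℚ) * ((n - i - j).factorial : ℚ))) ^ 2

/-- Sum of squares of binomial coefficients. -/
lemma sum_choose_sq (m : ℕ) :
    ∑ j ∈ Finset.range (m + 1), (m.choose j) ^ 2 = (2 * m).choose m := by
  have h := Nat.add_choose_eq m m m
  rw [Finset.Nat.sum_antidiagonal_eq_sum_range_succ_mk] at h
  rw [two_mul, h]
  refine Finset.sum_congr rfl fun j hj => ?_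
  have hj' : j ≤ m := Nat.lt_succ_iff.mp (Finset.mem_range.mp hj)
  rw [Nat.choose_symm hj', sq]

lemma trinom_eq (n i j : ℕ) (hi : i ≤ n) (hj : j ≤ n - i) :
    ((n.factorial : ℚ) / ((i.factorial : ℚ) * (j.factorial : ℚ) * ((n - i - j).factorial : ℚ)))
      = (n.choose i : ℚ) * ((n - i).choose j : ℚ) := by
  have h1 := Nat.choose_mul_factorial_mul_factorial hi
  have h2 := Nat.choose_mul_factorial_mul_factorial hj
  have e1 : ((n.choose i : ℚ)) * (i.factorial : ℚ) * ((n - i).factorial : ℚ) = (n.factorial : ℚ) := by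
    exact_mod_cast congrArg (Nat.cast : ℕ → ℚ) h1
  have e2 : (((n - i).choose j : ℚ)) * (j.factorial : ℚ) * ((n - i - j).factorial : ℚ)
      = ((n - i).factorial : ℚ) := by
    exact_mod_cast congrArg (Nat.cast : ℕ → ℚ) h2
  have f1 : (i.factorial : ℚ) ≠ 0 := Nat.cast_ne_zero.mpr i.factorial_ne_zero
  have f2 : (j.factorial : ℚ) ≠ 0 := Nat.cast_ne_zero.mpr j.factorial_ne_zero
  have f3 : ((n - i - j).factorial : ℚ) ≠ 0 := Nat.cast_ne_zero.mpr (n - i - j).factorial_ne_zero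
  field_simp
  linear_combination (-1 : ℚ) * e1 - ((n.choose i : ℚ) * (i.factorial : ℚ)) * e2

/-- The single-sum form. -/
noncomputable def bA (n : ℕ) : ℚ :=
  ∑ k ∈ Finset.range (n + 1), ((n.choose k : ℚ)) ^ 2 * (((2 * k).choose k : ℚ))

lemma bananaApery_eq (n : ℕ) : bananaApery n = bA n := by
  unfold bananaApery bA
  have step1 : ∀ i ∈ Finset.range (n + 1),
      (∑ j ∈ Finset.range (n + 1 - i),
        ((n.factorial : ℚ) / ((i.factorial : ℚ) * (j.factorial : ℚ) * ((n - i - j).factorial : ℚ))) ^ 2)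
      = ((n.choose i : ℚ)) ^ 2 * (((2 * (n - i)).choose (n - i) : ℚ)) := by
    intro i hi
    have hi' : i ≤ n := Nat.lt_succ_iff.mp (Finset.mem_range.mp hi)
    have hrange : n + 1 - i = (n - i) + 1 := by omega
    rw [hrange]
    have : ∀ j ∈ Finset.range ((n - i) + 1),
        ((n.factorial : ℚ) / ((i.factorial : ℚ) * (j.factorial : ℚ) * ((n - i - j).factorial : ℚ))) ^ 2
        = ((n.choose i : ℚ)) ^ 2 * (((n - i).choose j : ℚ)) ^ 2 := by
      intro j hj
      have hj' : j ≤ n - i := Nat.lt_succ_iff.mp (Finset.mem_range.mp hj)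
      rw [trinom_eq n i j hi' hj', mul_pow]
    rw [Finset.sum_congr rfl this, ← Finset.mul_sum]
    congr 1
    have := sum_choose_sq (n - i)
    have hc : ((∑ j ∈ Finset.range ((n - i) + 1), ((n - i).choose j) ^ 2 : ℕ) : ℚ)
        = (((2 * (n - i)).choose (n - i) : ℕ) : ℚ) := by exact_mod_cast this
    push_cast at hc ⊢
    exact hc
  rw [Finset.sum_congr rfl step1]
  have := Finset.sum_range_reflect
    (fun k => ((n.choose k : ℚ)) ^ 2 * (((2 * k).choose k : ℚ))) (n + 1)
  rw [← this]
  refine Finset.sum_congr rfl fun i hi => ?_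
  have hi' : i ≤ n := Nat.lt_succ_iff.mp (Finset.mem_range.mp hi)
  have h1 : n + 1 - 1 - i = n - i := by omega
  rw [h1, Nat.choose_symm hi']

/-- cast subtraction helper: `C(m,k) * (m+1) = C(m+1,k) * (m+1-k)` in ℚ. -/
lemma choose_cast_step (m k : ℕ) :
    ((m.choose k : ℚ)) * ((m : ℚ) + 1) = (((m + 1).choose k : ℚ)) * ((m : ℚ) + 1 - k) := by
  rcases le_or_gt k (m + 1) with h | h
  · have hn := Nat.choose_mul_succ_eq m k
    have : ((m.choose k : ℚ)) * ((m : ℚ) + 1) = (((m + 1).choose k : ℚ)) * ((m + 1 - k : ℕ) : ℚ) := by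
      exact_mod_cast congrArg (Nat.cast : ℕ → ℚ) hn
    rw [this, Nat.cast_sub h]
    push_cast; ring
  · rw [Nat.choose_eq_zero_of_lt (by omega), Nat.choose_eq_zero_of_lt (by omega)]
    simp

/-- Gosper-step lemma. -/
lemma gosper_step (n k : ℕ) :
    ((k : ℚ) + 1) ^ 3 * (((n + 2).choose (k + 1) : ℚ)) ^ 2 * (((2 * (k + 1)).choose (k + 1) : ℚ))
      = 2 * (2 * (k : ℚ) + 1) * ((n : ℚ) + 2 - k) ^ 2
        * (((n + 2).choose k : ℚ)) ^ 2 * (((2 * k).choose k : ℚ)) := by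
  have hc : (((n + 2).choose (k + 1) : ℚ)) * ((k : ℚ) + 1)
      = (((n + 2).choose k : ℚ)) * ((n : ℚ) + 2 - k) := by
    rcases le_or_gt k (n + 2) with h | h
    · have hn := Nat.choose_succ_right_eq (n + 2) k
      have : (((n + 2).choose (k + 1) : ℚ)) * ((k : ℚ) + 1)
          = (((n + 2).choose k : ℚ)) * ((n + 2 - k : ℕ) : ℚ) := by
        exact_mod_cast congrArg (Nat.cast : ℕ → ℚ) hn
      rw [this, Nat.cast_sub h]; push_cast; ring
    · rw [Nat.choose_eq_zero_of_lt (by omega), Nat.choose_eq_zero_of_lt (by omega)]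
      simp
  have hb : ((k : ℚ) + 1) * (((2 * (k + 1)).choose (k + 1) : ℚ))
      = 2 * (2 * (k : ℚ) + 1) * (((2 * k).choose k : ℚ)) := by
    have hn := Nat.succ_mul_centralBinom_succ k
    have h1 : (k + 1) * ((2 * (k + 1)).choose (k + 1)) = 2 * (2 * k + 1) * ((2 * k).choose k) := hn
    exact_mod_cast congrArg (Nat.cast : ℕ → ℚ) h1
  linear_combination
    (((k : ℚ) + 1) * (((2 * (k + 1)).choose (k + 1) : ℚ))
      * ((((n + 2).choose (k + 1) : ℚ)) * ((k : ℚ) + 1)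
        + (((n + 2).choose k : ℚ)) * ((n : ℚ) + 2 - k))) * hc
    + ((((n + 2).choose k : ℚ)) ^ 2 * ((n : ℚ) + 2 - k) ^ 2) * hb

noncomputable def Hc (n j : ℕ) : ℚ :=
  (j : ℚ) ^ 3 * (3 * (j : ℚ) - 4 * (n : ℚ) - 8) * (((n + 2).choose j : ℚ)) ^ 2
    * (((2 * j).choose j : ℚ))

/-- The Zeilberger certificate identity. -/
lemma cert (n k : ℕ) :
    ((n : ℚ) + 2) ^ 4 * (((n + 2).choose k : ℚ)) ^ 2 * (((2 * k).choose k : ℚ))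
      - ((n : ℚ) + 2) ^ 2 * (10 * ((n : ℚ) + 2) ^ 2 - 10 * ((n : ℚ) + 2) + 3)
          * (((n + 1).choose k : ℚ)) ^ 2 * (((2 * k).choose k : ℚ))
      + 9 * ((n : ℚ) + 1) ^ 2 * ((n : ℚ) + 2) ^ 2 * ((n.choose k : ℚ)) ^ 2
          * (((2 * k).choose k : ℚ))
      = Hc n (k + 1) - Hc n k := by
  have hL1 := gosper_step n k
  have hL2 : (((n + 1).choose k : ℚ)) * ((n : ℚ) + 2)
      = (((n + 2).choose k : ℚ)) * ((n : ℚ) + 2 - k) := by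
    rcases le_or_gt k (n + 2) with h | h
    · have hn : (n + 1).choose k * (n + 2) = (n + 2).choose k * (n + 2 - k) :=
        Nat.choose_mul_succ_eq (n + 1) k
      have h2 : (((n + 1).choose k : ℚ)) * ((n : ℚ) + 2)
          = (((n + 2).choose k : ℚ)) * ((n + 2 - k : ℕ) : ℚ) := by
        exact_mod_cast congrArg (Nat.cast : ℕ → ℚ) hn
      rw [h2, Nat.cast_sub h]; push_cast; ring
    · rw [Nat.choose_eq_zero_of_lt (by omega), Nat.choose_eq_zero_of_lt (by omega)]; simp
  have hL3 := choose_cast_step n k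
  unfold Hc
  push_cast
  linear_combination
    (4 * (n : ℚ) + 5 - 3 * (k : ℚ)) * hL1
    + ((-(10 * ((n : ℚ) + 2) ^ 2 - 10 * ((n : ℚ) + 2) + 3) + 9 * ((n : ℚ) + 1 - k) ^ 2)
        * (((2 * k).choose k : ℚ))
        * ((((n + 1).choose k : ℚ)) * ((n : ℚ) + 2)
          + (((n + 2).choose k : ℚ)) * ((n : ℚ) + 2 - k))) * hL2
    + (9 * (((2 * k).choose k : ℚ)) * ((n : ℚ) + 2) ^ 2
        * (((n.choose k : ℚ)) * ((n : ℚ) + 1)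
          + (((n + 1).choose k : ℚ)) * ((n : ℚ) + 1 - k))) * hL3

lemma bA_recurrence (n : ℕ) :
    ((n : ℚ) + 2) ^ 2 * bA (n + 2)
      = (10 * ((n : ℚ) + 2) ^ 2 - 10 * ((n : ℚ) + 2) + 3) * bA (n + 1)
        - 9 * ((n : ℚ) + 1) ^ 2 * bA n := by
  have tel := Finset.sum_range_sub (fun j => Hc n j) (n + 3)
  have h0 : Hc n 0 = 0 := by simp [Hc]
  have htop : Hc n (n + 3) = 0 := by
    have : (n + 2).choose (n + 3) = 0 := Nat.choose_eq_zero_of_lt (by omega)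
    simp [Hc, this]
  have e : ∀ k ∈ Finset.range (n + 3),
      (((n : ℚ) + 2) ^ 4 * ((((n + 2).choose k : ℚ)) ^ 2 * (((2 * k).choose k : ℚ)))
        - ((n : ℚ) + 2) ^ 2 * (10 * ((n : ℚ) + 2) ^ 2 - 10 * ((n : ℚ) + 2) + 3)
            * ((((n + 1).choose k : ℚ)) ^ 2 * (((2 * k).choose k : ℚ)))
        + 9 * ((n : ℚ) + 1) ^ 2 * ((n : ℚ) + 2) ^ 2 * (((n.choose k : ℚ)) ^ 2
            * (((2 * k).choose k : ℚ))))
      = Hc n (k + 1) - Hc n k := fun k _ => by linear_combination cert n k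
  have hsum : ∑ k ∈ Finset.range (n + 3),
      (((n : ℚ) + 2) ^ 4 * ((((n + 2).choose k : ℚ)) ^ 2 * (((2 * k).choose k : ℚ)))
        - ((n : ℚ) + 2) ^ 2 * (10 * ((n : ℚ) + 2) ^ 2 - 10 * ((n : ℚ) + 2) + 3)
            * ((((n + 1).choose k : ℚ)) ^ 2 * (((2 * k).choose k : ℚ)))
        + 9 * ((n : ℚ) + 1) ^ 2 * ((n : ℚ) + 2) ^ 2 * (((n.choose k : ℚ)) ^ 2
            * (((2 * k).choose k : ℚ)))) = 0 := by
    rw [Finset.sum_congr rfl e, tel, h0, htop, sub_zero]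
  have eS2 : ∑ k ∈ Finset.range (n + 3),
      (((n + 2).choose k : ℚ)) ^ 2 * (((2 * k).choose k : ℚ)) = bA (n + 2) := rfl
  have eS1 : ∑ k ∈ Finset.range (n + 3),
      (((n + 1).choose k : ℚ)) ^ 2 * (((2 * k).choose k : ℚ)) = bA (n + 1) := by
    rw [show n + 3 = (n + 2) + 1 from rfl, Finset.sum_range_succ]
    rw [Nat.choose_eq_zero_of_lt (by omega)]
    simp [bA]
  have eS0 : ∑ k ∈ Finset.range (n + 3),
      ((n.choose k : ℚ)) ^ 2 * (((2 * k).choose k : ℚ)) = bA n := by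
    rw [show n + 3 = (n + 2) + 1 from rfl, Finset.sum_range_succ,
      show n + 2 = (n + 1) + 1 from rfl, Finset.sum_range_succ]
    rw [Nat.choose_eq_zero_of_lt (show n < n + 2 by omega),
      Nat.choose_eq_zero_of_lt (show n < n + 1 by omega)]
    simp [bA]
  rw [Finset.sum_add_distrib, Finset.sum_sub_distrib, ← Finset.mul_sum, ← Finset.mul_sum,
    ← Finset.mul_sum, eS2, eS1, eS0] at hsum
  have h2 : ((n : ℚ) + 2) ^ 2 ≠ 0 := by positivity
  have key : ((n : ℚ) + 2) ^ 2 * (((n : ℚ) + 2) ^ 2 * bA (n + 2))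
      = ((n : ℚ) + 2) ^ 2 * ((10 * ((n : ℚ) + 2) ^ 2 - 10 * ((n : ℚ) + 2) + 3) * bA (n + 1)
        - 9 * ((n : ℚ) + 1) ^ 2 * bA n) := by
    linear_combination hsum
  exact mul_left_cancel₀ h2 key

/-- The sums of squares of trinomial coefficients `a_n = ∑_{i+j+k=n}(n!/(i!j!k!))²` satisfy
`a₀ = 1`, `a₁ = 3`, `a₂ = 15`, and for every `n ≥ 2` the Apéry-like recurrence
`n² a_n = (10n² − 10n + 3) a_{n−1} − 9(n−1)² a_{n−2}`. -/
theorem bananaApery_recurrence :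
    bananaApery 0 = 1 ∧ bananaApery 1 = 3 ∧ bananaApery 2 = 15 ∧
    ∀ n : ℕ, ((n : ℚ) + 2) ^ 2 * bananaApery (n + 2)
      = (10 * ((n : ℚ) + 2) ^ 2 - 10 * ((n : ℚ) + 2) + 3) * bananaApery (n + 1)
        - 9 * ((n : ℚ) + 1) ^ 2 * bananaApery n := by
  refine ⟨?_, ?_, ?_, ?_⟩
  · norm_num [bananaApery, Finset.sum_range_succ]
  · norm_num [bananaApery, Finset.sum_range_succ]
  · norm_num [bananaApery, Finset.sum_range_succ, Nat.factorial]
  · intro n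
    rw [bananaApery_eq, bananaApery_eq, bananaApery_eq]
    exact bA_recurrence n
end

section
/- Let r ≥ 1, let a, b be real numbers, let c₁, …, c_r be real numbers that are not nonpositive integers, and let z₁, …, z_r be complex numbers satisfying |z₁|^{1/2} + ⋯ + |z_r|^{1/2} < 1. Then the Lauricella F_C series Σ_{n ∈ ℕ₀^r} [(a)_{|n|} (b)_{|n|} / ∏_{i=1}^r (c_i)_{n_i}] · ∏_{i=1}^r z_i^{n_i}/n_i! converges absolutely, where |n| = n₁ + ⋯ + n_r. -/
open Finset

private lemma asc_eval_prod (x : ℝ) (n : ℕ) :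
    (ascPochhammer ℝ n).eval x = ∏ j ∈ range n, (x + j) := by
  induction n with
  | zero => simp
  | succ n ih => rw [ascPochhammer_succ_eval, ih, prod_range_succ]

private lemma lemA (M N : ℕ) :
    (∏ k ∈ range N, (M + 1 + k)) ≤ N.factorial * (N + M + 1) ^ (M + 1) := by
  induction M with
  | zero =>
    have h : (∏ k ∈ range N, (0 + 1 + k)) = N.factorial := by
      rw [← prod_range_add_one_eq_factorial]
      exact prod_congr rfl fun k _ => by omega
    rw [h, pow_one]
    exact Nat.le_mul_of_pos_right _ (by omega)
  | succ M ih =>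
    have key : (M + 1) * ∏ k ∈ range N, (M + 1 + 1 + k)
        = (∏ k ∈ range N, (M + 1 + k)) * (M + 1 + N) := by
      have h1 := prod_range_succ (fun k => M + 1 + k) N
      have h2 := prod_range_succ' (fun k => M + 1 + k) N
      calc (M + 1) * ∏ k ∈ range N, (M + 1 + 1 + k)
          = (∏ k ∈ range N, (M + 1 + (k + 1))) * (M + 1 + 0) := by
            rw [mul_comm]; congr 1; exact prod_congr rfl fun k _ => by omega
        _ = ∏ k ∈ range (N + 1), (M + 1 + k) := h2.symm
        _ = (∏ k ∈ range N, (M + 1 + k)) * (M + 1 + N) := h1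
    have h3 : (∏ k ∈ range N, (M + 1 + 1 + k)) ≤ (∏ k ∈ range N, (M + 1 + k)) * (M + 1 + N) := by
      rw [← key]; exact Nat.le_mul_of_pos_left _ (by omega)
    calc (∏ k ∈ range N, (M + 1 + 1 + k))
        ≤ (∏ k ∈ range N, (M + 1 + k)) * (M + 1 + N) := h3
      _ ≤ (N.factorial * (N + M + 1) ^ (M + 1)) * (M + 1 + N) :=
          Nat.mul_le_mul_right _ ih
      _ ≤ (N.factorial * (N + (M + 1) + 1) ^ (M + 1)) * (N + (M + 1) + 1) := by
          exact Nat.mul_le_mul (Nat.mul_le_mul_left _ (Nat.pow_le_pow_left (by omega) _)) (by omega)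
      _ = N.factorial * (N + (M + 1) + 1) ^ (M + 1 + 1) := by ring

private lemma lemA' (x : ℝ) (N M : ℕ) (hx : |x| ≤ M + 1) :
    |(ascPochhammer ℝ N).eval x| ≤ ((N.factorial * (N + M + 1) ^ (M + 1) : ℕ) : ℝ) := by
  rw [asc_eval_prod, Finset.abs_prod]
  calc (∏ j ∈ range N, |x + (j : ℝ)|)
      ≤ ∏ j ∈ range N, (((M + 1 + j : ℕ) : ℝ)) := by
        refine prod_le_prod (fun j _ => abs_nonneg _) (fun j _ => ?_)
        calc |x + (j : ℝ)| ≤ |x| + |(j : ℝ)| := abs_add_le _ _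
          _ ≤ (M + 1) + j := by
              rw [Nat.abs_cast]; exact add_le_add_left hx _
          _ = ((M + 1 + j : ℕ) : ℝ) := by push_cast; ring
    _ = ((∏ j ∈ range N, (M + 1 + j) : ℕ) : ℝ) := by rw [Nat.cast_prod]
    _ ≤ _ := Nat.cast_le.2 (lemA M N)

private lemma lemB {θ : ℝ} (hθ0 : 0 < θ) (hθ1 : θ < 1) {c : ℝ} (hc : ∀ k : ℕ, c ≠ -(k : ℝ)) :
    ∃ A : ℝ, 0 < A ∧ ∀ n : ℕ,
      A * θ ^ n * n.factorial ≤ |(ascPochhammer ℝ n).eval c| := by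
  have habs : ∀ j : ℕ, 0 < |c + j| := by
    intro j
    rw [abs_pos]
    intro h
    exact hc j (by linarith)
  set J : ℕ := ⌈(θ + |c|) / (1 - θ)⌉₊ with hJ_def
  have hJ : ∀ j : ℕ, J ≤ j → θ * (j + 1) ≤ |c + j| := by
    intro j hj
    have h1 : (θ + |c|) / (1 - θ) ≤ j := le_trans (Nat.le_ceil _) (Nat.cast_le.2 hj)
    have h2 : θ + |c| ≤ j * (1 - θ) := by
      rw [div_le_iff₀ (by linarith)] at h1; linarith
    have h3 : θ * (j + 1) ≤ j - |c| := by nlinarith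
    have h4 : (j : ℝ) - |c| ≤ |c + j| := by
      have h5 : (j : ℝ) ≤ |c + j| + |c| := by
        calc (j : ℝ) ≤ |(j : ℝ)| := le_abs_self _
          _ = |(c + j) + (-c)| := by congr 1; ring
          _ ≤ |c + j| + |-c| := abs_add_le _ _
          _ = |c + j| + |c| := by rw [abs_neg]
      linarith
    linarith
  set m : ℕ → ℝ := fun j => min 1 (|c + j| / (θ * (j + 1))) with hm_def
  have hm_pos : ∀ j, 0 < m j := fun j =>
    lt_min one_pos (div_pos (habs j) (by positivity))
  have hm_le1 : ∀ j, m j ≤ 1 := fun j => min_le_left _ _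
  have hm_bound : ∀ j : ℕ, m j * (θ * (j + 1)) ≤ |c + j| := by
    intro j
    have h1 : m j ≤ |c + j| / (θ * (j + 1)) := min_le_right _ _
    calc m j * (θ * (j + 1)) ≤ (|c + j| / (θ * (j + 1))) * (θ * (j + 1)) :=
          mul_le_mul_of_nonneg_right h1 (by positivity)
      _ = |c + j| := div_mul_cancel₀ _ (by positivity)
  have hm1 : ∀ j : ℕ, J ≤ j → m j = 1 := by
    intro j hj
    have : (1 : ℝ) ≤ |c + j| / (θ * (j + 1)) :=
      (one_le_div (by positivity)).2 (hJ j hj)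
    exact min_eq_left this
  refine ⟨∏ j ∈ range J, m j, prod_pos fun j _ => hm_pos j, fun n => ?_⟩
  have hAle : (∏ j ∈ range J, m j) ≤ ∏ j ∈ range n, m j := by
    rcases le_total n J with h | h
    · obtain ⟨k, hk⟩ := Nat.exists_eq_add_of_le h
      rw [hk, prod_range_add]
      exact mul_le_of_le_one_right (prod_pos fun j _ => hm_pos j).le
        (prod_le_one (fun j _ => (hm_pos _).le) (fun j _ => hm_le1 _))
    · obtain ⟨k, rfl⟩ := Nat.exists_eq_add_of_le h
      rw [prod_range_add]
      have : (∏ i ∈ range k, m (J + i)) = 1 :=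
        prod_eq_one fun i _ => hm1 _ (Nat.le_add_right _ _)
      rw [this, mul_one]
  calc (∏ j ∈ range J, m j) * θ ^ n * n.factorial
      ≤ (∏ j ∈ range n, m j) * θ ^ n * n.factorial := by
        have h0 : (0:ℝ) ≤ θ ^ n * n.factorial := by positivity
        calc (∏ j ∈ range J, m j) * θ ^ n * n.factorial
            = (∏ j ∈ range J, m j) * (θ ^ n * n.factorial) := by ring
          _ ≤ (∏ j ∈ range n, m j) * (θ ^ n * n.factorial) :=
              mul_le_mul_of_nonneg_right hAle h0
          _ = (∏ j ∈ range n, m j) * θ ^ n * n.factorial := by ring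
    _ = ∏ j ∈ range n, (m j * (θ * (j + 1))) := by
        rw [prod_mul_distrib, prod_mul_distrib, prod_const]
        have h1 : (∏ j ∈ range n, ((j : ℝ) + 1)) = (n.factorial : ℝ) := by
          rw [← prod_range_add_one_eq_factorial, Nat.cast_prod]
          push_cast
          rfl
        rw [h1, card_range]
        ring
    _ ≤ ∏ j ∈ range n, |c + j| := prod_le_prod
        (fun j _ => by positivity) (fun j _ => hm_bound j)
    _ = |(ascPochhammer ℝ n).eval c| := by
        rw [asc_eval_prod, Finset.abs_prod]

open scoped BigOperators

/-- The Lauricella `F_C` series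
`∑_{n ∈ ℕ₀^r} (a)_{|n|}(b)_{|n|} / ∏ᵢ (cᵢ)_{nᵢ} · ∏ᵢ zᵢ^{nᵢ}/nᵢ!`
converges absolutely whenever `|z₁|^{1/2} + ⋯ + |z_r|^{1/2} < 1`, for any real
parameters `a, b` and real `cᵢ` that are not nonpositive integers. -/
theorem lauricellaFC_summable (r : ℕ) (hr : 1 ≤ r) (a b : ℝ) (c : Fin r → ℝ)
    (hc : ∀ i, ∀ k : ℕ, c i ≠ -(k : ℝ))
    (z : Fin r → ℂ) (hz : ∑ i, Real.sqrt ‖z i‖ < 1) :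
    Summable fun n : Fin r → ℕ =>
      ‖(((((ascPochhammer ℝ (∑ i, n i)).eval a * (ascPochhammer ℝ (∑ i, n i)).eval b) /
            ∏ i, (ascPochhammer ℝ (n i)).eval (c i)) : ℝ) : ℂ)
        * ∏ i, z i ^ n i / ((n i).factorial : ℂ)‖ := by
  classical
  set s := ∑ i, Real.sqrt ‖z i‖ with hs_def
  have hs0 : 0 ≤ s := Finset.sum_nonneg fun i _ => Real.sqrt_nonneg _
  set θ : ℝ := (1 + s) / 2 with hθ_def
  have hθ0 : 0 < θ := by rw [hθ_def]; linarith
  have hθ1 : θ < 1 := by rw [hθ_def]; linarith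
  set x : Fin r → ℝ := fun i => Real.sqrt (‖z i‖ / θ) with hx_def
  have hx0 : ∀ i, 0 ≤ x i := fun i => Real.sqrt_nonneg _
  set q : ℝ := ∑ i, x i with hq_def
  have hq0 : 0 ≤ q := Finset.sum_nonneg fun i _ => hx0 i
  have hq1 : q < 1 := by
    have hxe : ∀ i ∈ (univ : Finset (Fin r)), x i = Real.sqrt ‖z i‖ / Real.sqrt θ :=
      fun i _ => Real.sqrt_div (norm_nonneg _) θ
    rw [hq_def, Finset.sum_congr rfl hxe, ← Finset.sum_div, ← hs_def,
      div_lt_one (Real.sqrt_pos.2 hθ0), Real.lt_sqrt hs0]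
    nlinarith
  have hq2 : q ^ 2 < 1 := by nlinarith
  choose A hA0 hA using fun i => lemB hθ0 hθ1 (hc i)
  set C₀ : ℝ := ∏ i, A i with hC₀_def
  have hC₀ : 0 < C₀ := Finset.prod_pos fun i _ => hA0 i
  set Ma := ⌈|a|⌉₊ with hMa_def
  set Mb := ⌈|b|⌉₊ with hMb_def
  set K := Ma + Mb + 2 with hK_def
  have hK2 : 2 ≤ K := by omega
  -- numerator bound
  have hnum : ∀ N : ℕ, |(ascPochhammer ℝ N).eval a * (ascPochhammer ℝ N).eval b|
      ≤ (N.factorial : ℝ) ^ 2 * (((N + K) ^ K : ℕ) : ℝ) := by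
    intro N
    have ha' := lemA' a N Ma (le_trans (Nat.le_ceil _) (by push_cast; linarith))
    have hb' := lemA' b N Mb (le_trans (Nat.le_ceil _) (by push_cast; linarith))
    have hnat : (N.factorial * (N + Ma + 1) ^ (Ma + 1)) *
        (N.factorial * (N + Mb + 1) ^ (Mb + 1)) ≤ N.factorial ^ 2 * (N + K) ^ K := by
      have h1 : (N + Ma + 1) ^ (Ma + 1) * (N + Mb + 1) ^ (Mb + 1) ≤ (N + K) ^ K := by
        calc (N + Ma + 1) ^ (Ma + 1) * (N + Mb + 1) ^ (Mb + 1)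
            ≤ (N + K) ^ (Ma + 1) * (N + K) ^ (Mb + 1) :=
              Nat.mul_le_mul (Nat.pow_le_pow_left (by omega) _)
                (Nat.pow_le_pow_left (by omega) _)
          _ = (N + K) ^ K := by rw [← pow_add]; congr 1; omega
      calc (N.factorial * (N + Ma + 1) ^ (Ma + 1)) * (N.factorial * (N + Mb + 1) ^ (Mb + 1))
          = N.factorial ^ 2 * ((N + Ma + 1) ^ (Ma + 1) * (N + Mb + 1) ^ (Mb + 1)) := by ring
        _ ≤ N.factorial ^ 2 * (N + K) ^ K := Nat.mul_le_mul_left _ h1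
    calc |(ascPochhammer ℝ N).eval a * (ascPochhammer ℝ N).eval b|
        = |(ascPochhammer ℝ N).eval a| * |(ascPochhammer ℝ N).eval b| := abs_mul _ _
      _ ≤ ((N.factorial * (N + Ma + 1) ^ (Ma + 1) : ℕ) : ℝ) *
            ((N.factorial * (N + Mb + 1) ^ (Mb + 1) : ℕ) : ℝ) :=
          mul_le_mul ha' hb' (abs_nonneg _) (Nat.cast_nonneg _)
      _ = (((N.factorial * (N + Ma + 1) ^ (Ma + 1)) *
            (N.factorial * (N + Mb + 1) ^ (Mb + 1)) : ℕ) : ℝ) := by push_cast; ring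
      _ ≤ ((N.factorial ^ 2 * (N + K) ^ K : ℕ) : ℝ) := Nat.cast_le.2 hnat
      _ = (N.factorial : ℝ) ^ 2 * (((N + K) ^ K : ℕ) : ℝ) := by push_cast; ring
  -- multinomial as a ratio of factorials
  have mult_eq : ∀ n : Fin r → ℕ, (Nat.multinomial (univ : Finset (Fin r)) n : ℝ)
      = (((∑ i, n i).factorial : ℝ)) / ∏ i, ((n i).factorial : ℝ) := by
    intro n
    have hspec := Nat.multinomial_spec (univ : Finset (Fin r)) n
    have hfac : (∏ i, ((n i).factorial : ℝ)) ≠ 0 :=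
      ne_of_gt (Finset.prod_pos fun i _ => by positivity)
    rw [eq_div_iff hfac, mul_comm]
    exact_mod_cast congrArg (Nat.cast : ℕ → ℝ) hspec
  -- the fiber identity (multinomial theorem)
  have fiber : ∀ N : ℕ, (∑ n ∈ Finset.piAntidiag (univ : Finset (Fin r)) N,
      ((Nat.multinomial univ n : ℝ) * ∏ i, x i ^ n i)) = q ^ N := by
    intro N
    rw [hq_def]
    exact (Finset.sum_pow_eq_sum_piAntidiag univ x N).symm
  have multbd : ∀ n : Fin r → ℕ,
      (Nat.multinomial (univ : Finset (Fin r)) n : ℝ) * ∏ i, x i ^ n i ≤ q ^ (∑ i, n i) := by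
    intro n
    rw [← fiber (∑ i, n i)]
    refine Finset.single_le_sum (f := fun k : Fin r → ℕ =>
      (Nat.multinomial (univ : Finset (Fin r)) k : ℝ) * ∏ i, x i ^ k i) (fun k _ => ?_) ?_
    · exact mul_nonneg (Nat.cast_nonneg _)
        (Finset.prod_nonneg fun i _ => pow_nonneg (hx0 i) _)
    · rw [Finset.mem_piAntidiag]
      exact ⟨rfl, fun i _ => Finset.mem_univ i⟩
  -- key pointwise bound
  have key : ∀ n : Fin r → ℕ,
      ‖(((((ascPochhammer ℝ (∑ i, n i)).eval a * (ascPochhammer ℝ (∑ i, n i)).eval b) /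
            ∏ i, (ascPochhammer ℝ (n i)).eval (c i)) : ℝ) : ℂ)
        * ∏ i, z i ^ n i / ((n i).factorial : ℂ)‖
      ≤ C₀⁻¹ * ((((∑ i, n i) + K) ^ K : ℕ) : ℝ) * q ^ (∑ i, n i) *
          ((Nat.multinomial (univ : Finset (Fin r)) n : ℝ) * ∏ i, x i ^ n i) := by
    intro n
    have hE0 : 0 ≤ (Nat.multinomial (univ : Finset (Fin r)) n : ℝ) * ∏ i, x i ^ n i :=
      mul_nonneg (Nat.cast_nonneg _) (Finset.prod_nonneg fun i _ => pow_nonneg (hx0 i) _)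
    have hEq := multbd n
    set N := ∑ i, n i with hN_def
    have hnorm : ‖(((((ascPochhammer ℝ N).eval a * (ascPochhammer ℝ N).eval b) /
            ∏ i, (ascPochhammer ℝ (n i)).eval (c i)) : ℝ) : ℂ)
          * ∏ i, z i ^ n i / ((n i).factorial : ℂ)‖
        = |((ascPochhammer ℝ N).eval a * (ascPochhammer ℝ N).eval b) /
            ∏ i, (ascPochhammer ℝ (n i)).eval (c i)|
          * ∏ i, (‖z i‖ ^ n i / ((n i).factorial : ℝ)) := by
      rw [norm_mul, Complex.norm_real, Real.norm_eq_abs, norm_prod]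
      congr 1
      exact Finset.prod_congr rfl fun i _ => by
        rw [norm_div, norm_pow, Complex.norm_natCast]
    have hDpos : (0:ℝ) < ∏ i, (A i * θ ^ n i * ((n i).factorial : ℝ)) :=
      Finset.prod_pos fun i _ =>
        mul_pos (mul_pos (hA0 i) (pow_pos hθ0 _)) (by positivity)
    have hDle : (∏ i, (A i * θ ^ n i * ((n i).factorial : ℝ)))
        ≤ ∏ i, |(ascPochhammer ℝ (n i)).eval (c i)| :=
      Finset.prod_le_prod (fun i _ =>
        (mul_pos (mul_pos (hA0 i) (pow_pos hθ0 _)) (by positivity : (0:ℝ) < ((n i).factorial : ℝ))).le)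
        (fun i _ => hA i (n i))
    have hme := mult_eq n
    rw [← hN_def] at hme
    have hDfact : (∏ i, (A i * θ ^ n i * ((n i).factorial : ℝ)))
        = C₀ * θ ^ N * ∏ i, ((n i).factorial : ℝ) := by
      rw [Finset.prod_mul_distrib, Finset.prod_mul_distrib, Finset.prod_pow_eq_pow_sum,
        ← hN_def, ← hC₀_def]
    have hxsq : (∏ i, x i ^ n i) ^ 2 = (∏ i, ‖z i‖ ^ n i) / θ ^ N := by
      rw [← Finset.prod_pow]
      have h2 : ∀ i ∈ (univ : Finset (Fin r)),
          (x i ^ n i) ^ 2 = ‖z i‖ ^ n i / θ ^ n i := by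
        intro i _
        rw [← pow_mul, mul_comm (n i) 2, pow_mul]
        have : x i ^ 2 = ‖z i‖ / θ := by
          rw [hx_def]
          exact Real.sq_sqrt (div_nonneg (norm_nonneg _) hθ0.le)
        rw [this, div_pow]
      rw [Finset.prod_congr rfl h2, Finset.prod_div_distrib, Finset.prod_pow_eq_pow_sum,
        ← hN_def]
    have hfacpos : (0:ℝ) < ∏ i, ((n i).factorial : ℝ) :=
      Finset.prod_pos fun i _ => by positivity
    have algid : ((N.factorial : ℝ) ^ 2 * (((N + K) ^ K : ℕ) : ℝ) /
          ∏ i, (A i * θ ^ n i * ((n i).factorial : ℝ)))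
          * ∏ i, (‖z i‖ ^ n i / ((n i).factorial : ℝ))
        = C₀⁻¹ * (((N + K) ^ K : ℕ) : ℝ) *
            ((Nat.multinomial (univ : Finset (Fin r)) n : ℝ) * ∏ i, x i ^ n i) ^ 2 := by
      rw [hDfact, mul_pow, hxsq, hme, Finset.prod_div_distrib]
      field_simp
    calc ‖(((((ascPochhammer ℝ N).eval a * (ascPochhammer ℝ N).eval b) /
            ∏ i, (ascPochhammer ℝ (n i)).eval (c i)) : ℝ) : ℂ)
          * ∏ i, z i ^ n i / ((n i).factorial : ℂ)‖
        = (|((ascPochhammer ℝ N).eval a * (ascPochhammer ℝ N).eval b)| /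
            ∏ i, |(ascPochhammer ℝ (n i)).eval (c i)|)
          * ∏ i, (‖z i‖ ^ n i / ((n i).factorial : ℝ)) := by
          rw [hnorm, abs_div, Finset.abs_prod]
      _ ≤ (((N.factorial : ℝ) ^ 2 * (((N + K) ^ K : ℕ) : ℝ)) /
            ∏ i, (A i * θ ^ n i * ((n i).factorial : ℝ)))
          * ∏ i, (‖z i‖ ^ n i / ((n i).factorial : ℝ)) := by
          refine mul_le_mul_of_nonneg_right ?_
            (Finset.prod_nonneg fun i _ => by positivity)
          exact div_le_div₀ (by positivity) (hnum N) hDpos hDle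
      _ = C₀⁻¹ * (((N + K) ^ K : ℕ) : ℝ) *
            ((Nat.multinomial (univ : Finset (Fin r)) n : ℝ) * ∏ i, x i ^ n i) ^ 2 := algid
      _ ≤ C₀⁻¹ * (((N + K) ^ K : ℕ) : ℝ) *
            (q ^ N * ((Nat.multinomial (univ : Finset (Fin r)) n : ℝ) * ∏ i, x i ^ n i)) := by
          refine mul_le_mul_of_nonneg_left ?_ (by positivity)
          rw [sq]
          exact mul_le_mul_of_nonneg_right hEq hE0
      _ = C₀⁻¹ * (((N + K) ^ K : ℕ) : ℝ) * q ^ N *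
            ((Nat.multinomial (univ : Finset (Fin r)) n : ℝ) * ∏ i, x i ^ n i) := by ring
  have key' : ∀ (n : Fin r → ℕ) (N : ℕ), (∑ i, n i) = N →
      ‖(((((ascPochhammer ℝ N).eval a * (ascPochhammer ℝ N).eval b) /
            ∏ i, (ascPochhammer ℝ (n i)).eval (c i)) : ℝ) : ℂ)
        * ∏ i, z i ^ n i / ((n i).factorial : ℂ)‖
      ≤ (C₀⁻¹ * (((N + K) ^ K : ℕ) : ℝ) * q ^ N) *
          ((Nat.multinomial (univ : Finset (Fin r)) n : ℝ) * ∏ i, x i ^ n i) := by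
    intro n N hsn
    subst hsn
    exact key n
  -- summability of the dominating series in N
  have hρ : ‖q ^ 2‖ < 1 := by
    rw [Real.norm_eq_abs, abs_of_nonneg (sq_nonneg q)]; exact hq2
  have hT : Summable (fun N : ℕ => (((N + K) ^ K : ℕ) : ℝ) * (q ^ 2) ^ N) := by
    have h1 : Summable (fun N : ℕ =>
        ((2 * K : ℕ) : ℝ) ^ K * ((N : ℝ) ^ K * (q ^ 2) ^ N + (q ^ 2) ^ N)) :=
      Summable.mul_left _ ((summable_pow_mul_geometric_of_norm_lt_one K hρ).add
        (summable_geometric_of_lt_one (sq_nonneg q) hq2))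
    refine Summable.of_nonneg_of_le (fun N => by positivity) (fun N => ?_) h1
    have hnat : (N + K) ^ K ≤ (2 * K) ^ K * (N ^ K + 1) := by
      rcases Nat.eq_zero_or_pos N with h | h
      · subst h
        calc (0 + K) ^ K = K ^ K * 1 := by ring
          _ ≤ (2 * K) ^ K * (0 ^ K + 1) :=
            Nat.mul_le_mul (Nat.pow_le_pow_left (by omega) _) (Nat.le_add_left 1 _)
      · have h2 : N + K ≤ 2 * K * N := by nlinarith
        calc (N + K) ^ K ≤ (2 * K * N) ^ K := Nat.pow_le_pow_left h2 _
          _ = (2 * K) ^ K * N ^ K := by rw [mul_pow]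
          _ ≤ (2 * K) ^ K * (N ^ K + 1) := Nat.mul_le_mul_left _ (by omega)
    calc (((N + K) ^ K : ℕ) : ℝ) * (q ^ 2) ^ N
        ≤ (((2 * K) ^ K * (N ^ K + 1) : ℕ) : ℝ) * (q ^ 2) ^ N :=
          mul_le_mul_of_nonneg_right (Nat.cast_le.2 hnat) (by positivity)
      _ = ((2 * K : ℕ) : ℝ) ^ K * ((N : ℝ) ^ K * (q ^ 2) ^ N + (q ^ 2) ^ N) := by
          push_cast; ring
  -- conclude by bounding all partial sums
  refine summable_of_sum_le (c := C₀⁻¹ * ∑' N : ℕ, (((N + K) ^ K : ℕ) : ℝ) * (q ^ 2) ^ N)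
    (fun n => norm_nonneg _) (fun u => ?_)
  set B := u.sup (fun n : Fin r → ℕ => ∑ i, n i) with hB_def
  have hsub : u ⊆ (Finset.range (B + 1)).biUnion
      (fun N => Finset.piAntidiag (univ : Finset (Fin r)) N) := by
    intro n hn
    rw [Finset.mem_biUnion]
    exact ⟨∑ i, n i, Finset.mem_range.2 (Nat.lt_succ_of_le (Finset.le_sup hn)),
      Finset.mem_piAntidiag.2 ⟨rfl, fun i _ => Finset.mem_univ i⟩⟩
  have hdisj : Set.PairwiseDisjoint (↑(Finset.range (B + 1)) : Set ℕ)
      (fun N => Finset.piAntidiag (univ : Finset (Fin r)) N) := by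
    intro N₁ _ N₂ _ hne
    refine Finset.disjoint_left.2 fun n h1 h2 => hne ?_
    rw [← (Finset.mem_piAntidiag.1 h1).1, ← (Finset.mem_piAntidiag.1 h2).1]
  calc (∑ n ∈ u, ‖(((((ascPochhammer ℝ (∑ i, n i)).eval a * (ascPochhammer ℝ (∑ i, n i)).eval b) /
            ∏ i, (ascPochhammer ℝ (n i)).eval (c i)) : ℝ) : ℂ)
        * ∏ i, z i ^ n i / ((n i).factorial : ℂ)‖)
      ≤ ∑ n ∈ (Finset.range (B + 1)).biUnion
          (fun N => Finset.piAntidiag (univ : Finset (Fin r)) N),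
          ‖(((((ascPochhammer ℝ (∑ i, n i)).eval a * (ascPochhammer ℝ (∑ i, n i)).eval b) /
            ∏ i, (ascPochhammer ℝ (n i)).eval (c i)) : ℝ) : ℂ)
          * ∏ i, z i ^ n i / ((n i).factorial : ℂ)‖ :=
        Finset.sum_le_sum_of_subset_of_nonneg hsub (fun n _ _ => norm_nonneg _)
    _ = ∑ N ∈ Finset.range (B + 1), ∑ n ∈ Finset.piAntidiag (univ : Finset (Fin r)) N,
          ‖(((((ascPochhammer ℝ (∑ i, n i)).eval a * (ascPochhammer ℝ (∑ i, n i)).eval b) /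
            ∏ i, (ascPochhammer ℝ (n i)).eval (c i)) : ℝ) : ℂ)
          * ∏ i, z i ^ n i / ((n i).factorial : ℂ)‖ := Finset.sum_biUnion hdisj
    _ ≤ ∑ N ∈ Finset.range (B + 1), C₀⁻¹ * ((((N + K) ^ K : ℕ) : ℝ) * (q ^ 2) ^ N) := by
        refine Finset.sum_le_sum fun N _ => ?_
        calc (∑ n ∈ Finset.piAntidiag (univ : Finset (Fin r)) N,
              ‖(((((ascPochhammer ℝ (∑ i, n i)).eval a * (ascPochhammer ℝ (∑ i, n i)).eval b) /
                ∏ i, (ascPochhammer ℝ (n i)).eval (c i)) : ℝ) : ℂ)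
              * ∏ i, z i ^ n i / ((n i).factorial : ℂ)‖)
            ≤ ∑ n ∈ Finset.piAntidiag (univ : Finset (Fin r)) N,
              (C₀⁻¹ * (((N + K) ^ K : ℕ) : ℝ) * q ^ N) *
                ((Nat.multinomial (univ : Finset (Fin r)) n : ℝ) * ∏ i, x i ^ n i) := by
              refine Finset.sum_le_sum fun n hn => ?_
              have hsn' : (∑ i, n i) = N := (Finset.mem_piAntidiag.1 hn).1
              rw [hsn']
              exact key' n N hsn'
          _ = (C₀⁻¹ * (((N + K) ^ K : ℕ) : ℝ) * q ^ N) * q ^ N := by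
              rw [← Finset.mul_sum, fiber N]
          _ = C₀⁻¹ * ((((N + K) ^ K : ℕ) : ℝ) * (q ^ 2) ^ N) := by
              have h3 : (q ^ 2) ^ N = q ^ N * q ^ N := by
                rw [← pow_mul, two_mul, pow_add]
              rw [h3]; ring
    _ = C₀⁻¹ * ∑ N ∈ Finset.range (B + 1), (((N + K) ^ K : ℕ) : ℝ) * (q ^ 2) ^ N := by
        rw [← Finset.mul_sum]
    _ ≤ C₀⁻¹ * ∑' N : ℕ, (((N + K) ^ K : ℕ) : ℝ) * (q ^ 2) ^ N := by
        refine mul_le_mul_of_nonneg_left ?_ (inv_nonneg.2 hC₀.le)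
        exact Summable.sum_le_tsum _ (fun N _ => by positivity) hT
end

section
/- The matrices A = [[1, 2], [0, 1]] and B = [[1, 0], [−2, 1]] in SL(2, ℤ) generate a free group of rank 2: no nonempty reduced word in A, A⁻¹, B, B⁻¹ equals the identity matrix. -/
open Matrix

/-- The matrix `[[1,2],[0,1]]` as an element of `SL(2,ℤ)`. -/
noncomputable def sanovA : Matrix.SpecialLinearGroup (Fin 2) ℤ :=
  ⟨!![1, 2; 0, 1], by norm_num [Matrix.det_fin_two_of]⟩

/-- The matrix `[[1,0],[−2,1]]` as an element of `SL(2,ℤ)`. -/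
noncomputable def sanovB : Matrix.SpecialLinearGroup (Fin 2) ℤ :=
  ⟨!![1, 0; -2, 1], by norm_num [Matrix.det_fin_two_of]⟩

/-- Irrationality of a ratio is preserved by an integral Möbius transformation of det 1. -/
lemma sanov_mobius_irrational (a b c d : ℤ) (hdet : a * d - b * c = 1) (x y : ℝ)
    (h : Irrational (x / y)) :
    Irrational (((a : ℝ) * x + b * y) / ((c : ℝ) * x + d * y)) := by
  have hy : y ≠ 0 := by
    intro hy0
    rw [hy0, div_zero] at h
    exact h ⟨0, by simp⟩
  have hD : (c : ℝ) * x + d * y ≠ 0 := by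
    intro hD0
    rcases eq_or_ne c 0 with rfl | hc
    · have hd : d ≠ 0 := by rintro rfl; simp at hdet
      push_cast at hD0
      simp at hD0
      rcases hD0 with h' | h'
      · exact hd (by exact_mod_cast h')
      · exact hy h'
    · have hcR : (c : ℝ) ≠ 0 := by exact_mod_cast hc
      refine h ⟨(-d : ℚ) / (c : ℚ), ?_⟩
      push_cast
      field_simp
      linarith
  intro ⟨q, hq⟩
  have hN : (a : ℝ) * x + b * y = (q : ℝ) * ((c : ℝ) * x + d * y) := by
    field_simp at hq
    rw [eq_div_iff (by rw [mul_comm x, mul_comm y]; exact hD)] at hq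
    linarith [hq]
  rcases eq_or_ne ((a : ℝ) - (q : ℝ) * c) 0 with hz | hz
  · -- then a = q c and b = q d, contradicting det = 1
    have hxa : (a : ℝ) = (q : ℝ) * c := by linarith
    have hax : (a : ℝ) * x = (q : ℝ) * c * x := by rw [hxa]
    have hby : (b : ℝ) * y = ((q : ℝ) * d) * y := by linarith [hN, hax]
    have hb : (b : ℝ) = (q : ℝ) * d := mul_right_cancel₀ hy hby
    have hdetR : (a : ℝ) * d - b * c = 1 := by exact_mod_cast hdet
    have e1 : (a : ℝ) * d = (q : ℝ) * c * d := by rw [hxa]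
    have e2 : (b : ℝ) * c = (q : ℝ) * d * c := by rw [hb]
    nlinarith [hdetR, e1, e2]
  · -- then x / y would be rational
    refine h ⟨(q * (d : ℚ) - b) / ((a : ℚ) - q * c), ?_⟩
    push_cast
    rw [div_eq_div_iff hz hy]
    linarith [hN]

/-- The key inequality for the ping-pong argument. -/
lemma sanov_keyA (x y : ℝ) (hy : y ≠ 0) (h1 : x ≠ y) (h2 : x ≠ -y)
    (h : ¬(|y| < |x| ∧ x * y < 0)) : |y| < |x + 2 * y| ∧ 0 < (x + 2 * y) * y := by
  have habs : |x| ≠ |y| := by rw [Ne, abs_eq_abs]; push_neg; exact ⟨h1, h2⟩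
  have h3 : 0 < |y| := abs_pos.mpr hy
  push_neg at h
  rcases habs.lt_or_gt with hc | hc
  · rcases abs_cases x with ⟨hx, hx'⟩ | ⟨hx, hx'⟩ <;>
      rcases abs_cases y with ⟨hyy, hy'⟩ | ⟨hyy, hy'⟩ <;>
      rcases abs_cases (x + 2 * y) with ⟨hz, hz'⟩ | ⟨hz, hz'⟩ <;>
      constructor <;> nlinarith [h3]
  · have hprod := h hc
    rcases abs_cases x with ⟨hx, hx'⟩ | ⟨hx, hx'⟩ <;>
      rcases abs_cases y with ⟨hyy, hy'⟩ | ⟨hyy, hy'⟩ <;>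
      rcases abs_cases (x + 2 * y) with ⟨hz, hz'⟩ | ⟨hz, hz'⟩ <;>
      constructor <;> nlinarith [h3]

/-- The real matrix associated to an element of `SL(2,ℤ)`. -/
noncomputable def sanovMat (g : Matrix.SpecialLinearGroup (Fin 2) ℤ) :
    Matrix (Fin 2) (Fin 2) ℝ :=
  g.val.map (Int.castRingHom ℝ)

/-- The space the ping-pong action takes place on: vectors of `ℝ²` with irrational slope. -/
def SanovSpace : Type := {v : Fin 2 → ℝ // Irrational (v 0 / v 1)}

lemma sanov_smul_mem (g : Matrix.SpecialLinearGroup (Fin 2) ℤ) (v : Fin 2 → ℝ)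
    (hv : Irrational (v 0 / v 1)) :
    Irrational ((sanovMat g).mulVec v 0 / (sanovMat g).mulVec v 1) := by
  have hdet : g.1 0 0 * g.1 1 1 - g.1 0 1 * g.1 1 0 = 1 := by
    have := g.2
    rw [Matrix.det_fin_two] at this
    linarith
  have := sanov_mobius_irrational (g.1 0 0) (g.1 0 1) (g.1 1 0) (g.1 1 1) hdet (v 0) (v 1) hv
  simpa [sanovMat, Matrix.mulVec, dotProduct, Fin.sum_univ_two, Matrix.map_apply] using this

noncomputable instance : MulAction (Matrix.SpecialLinearGroup (Fin 2) ℤ) SanovSpace where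
  smul g v := ⟨(sanovMat g).mulVec v.1, sanov_smul_mem g v.1 v.2⟩
  one_smul v := by
    apply Subtype.ext
    show (sanovMat 1).mulVec v.1 = v.1
    simp [sanovMat]
  mul_smul g h v := by
    apply Subtype.ext
    show (sanovMat (g * h)).mulVec v.1 = (sanovMat g).mulVec ((sanovMat h).mulVec v.1)
    funext i
    fin_cases i <;>
      simp [sanovMat, Matrix.mulVec, dotProduct, Fin.sum_univ_two, Matrix.map_apply,
        Matrix.SpecialLinearGroup.coe_mul, Matrix.mul_apply] <;>
      push_cast <;> ring

lemma sanov_smul_def (g : Matrix.SpecialLinearGroup (Fin 2) ℤ) (v : SanovSpace) :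
    (g • v).1 = (sanovMat g).mulVec v.1 := rfl

lemma sanovA_inv : sanovA⁻¹ = (⟨!![1, -2; 0, 1], by norm_num [Matrix.det_fin_two_of]⟩ :
    Matrix.SpecialLinearGroup (Fin 2) ℤ) := by
  apply inv_eq_of_mul_eq_one_right
  apply Subtype.ext
  show sanovA.val * _ = (1 : Matrix (Fin 2) (Fin 2) ℤ)
  rw [show (1 : Matrix (Fin 2) (Fin 2) ℤ) = !![1,0;0,1] by rw [Matrix.one_fin_two]]
  norm_num [sanovA, Matrix.mul_fin_two]

lemma sanovB_inv : sanovB⁻¹ = (⟨!![1, 0; 2, 1], by norm_num [Matrix.det_fin_two_of]⟩ :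
    Matrix.SpecialLinearGroup (Fin 2) ℤ) := by
  apply inv_eq_of_mul_eq_one_right
  apply Subtype.ext
  show sanovB.val * _ = (1 : Matrix (Fin 2) (Fin 2) ℤ)
  rw [show (1 : Matrix (Fin 2) (Fin 2) ℤ) = !![1,0;0,1] by rw [Matrix.one_fin_two]]
  norm_num [sanovB, Matrix.mul_fin_two]

lemma sanov_smulA (v : SanovSpace) :
    (sanovA • v).1 = ![v.1 0 + 2 * v.1 1, v.1 1] := by
  rw [sanov_smul_def]
  funext i
  fin_cases i <;>
    simp [sanovMat, sanovA, Matrix.mulVec, dotProduct, Fin.sum_univ_two, Matrix.map_apply] <;>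
    push_cast <;> ring

lemma sanov_smulA_inv (v : SanovSpace) :
    (sanovA⁻¹ • v).1 = ![v.1 0 - 2 * v.1 1, v.1 1] := by
  rw [sanov_smul_def, sanovA_inv]
  funext i
  fin_cases i <;>
    simp [sanovMat, Matrix.mulVec, dotProduct, Fin.sum_univ_two, Matrix.map_apply] <;>
    push_cast <;> ring

lemma sanov_smulB (v : SanovSpace) :
    (sanovB • v).1 = ![v.1 0, v.1 1 - 2 * v.1 0] := by
  rw [sanov_smul_def]
  funext i
  fin_cases i <;>
    simp [sanovMat, sanovB, Matrix.mulVec, dotProduct, Fin.sum_univ_two, Matrix.map_apply] <;>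
    push_cast <;> ring

lemma sanov_smulB_inv (v : SanovSpace) :
    (sanovB⁻¹ • v).1 = ![v.1 0, v.1 1 + 2 * v.1 0] := by
  rw [sanov_smul_def, sanovB_inv]
  funext i
  fin_cases i <;>
    simp [sanovMat, Matrix.mulVec, dotProduct, Fin.sum_univ_two, Matrix.map_apply] <;>
    push_cast <;> ring

/-- The ping-pong sets `X`. -/
def sanovX : Fin 2 → Set SanovSpace :=
  ![{v | |v.1 1| < |v.1 0| ∧ 0 < v.1 0 * v.1 1},
    {v | |v.1 0| < |v.1 1| ∧ v.1 0 * v.1 1 < 0}]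

/-- The ping-pong sets `Y`. -/
def sanovY : Fin 2 → Set SanovSpace :=
  ![{v | |v.1 1| < |v.1 0| ∧ v.1 0 * v.1 1 < 0},
    {v | |v.1 0| < |v.1 1| ∧ 0 < v.1 0 * v.1 1}]

lemma sanov_basic (v : SanovSpace) :
    v.1 1 ≠ 0 ∧ v.1 0 ≠ 0 ∧ v.1 0 ≠ v.1 1 ∧ v.1 0 ≠ -v.1 1 := by
  have hv := v.2
  have h1 : v.1 1 ≠ 0 := by
    intro h0; rw [h0, div_zero] at hv; exact hv ⟨0, by simp⟩
  refine ⟨h1, ?_, ?_, ?_⟩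
  · intro h0; rw [h0, zero_div] at hv; exact hv ⟨0, by simp⟩
  · intro h0; rw [h0, div_self h1] at hv; exact hv ⟨1, by simp⟩
  · intro h0; rw [h0, neg_div, div_self h1] at hv; exact hv ⟨-1, by simp⟩

lemma sanov_sqrt2_facts : 0 < Real.sqrt 2 ∧ 1 < Real.sqrt 2 := by
  have h2 : Real.sqrt 2 ^ 2 = 2 := Real.sq_sqrt (by norm_num)
  have hpos : 0 < Real.sqrt 2 := Real.sqrt_pos.mpr (by norm_num)
  exact ⟨hpos, by nlinarith⟩

/-- Sanov's theorem: the matrices `A = [[1,2],[0,1]]` and `B = [[1,0],[−2,1]]` generate a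
free group of rank 2 in `SL(2,ℤ)`: the homomorphism from the free group on two
generators sending them to `A` and `B` is injective (equivalently, no nonempty reduced
word in `A, A⁻¹, B, B⁻¹` equals the identity). -/
theorem sanov_free :
    Function.Injective ⇑(FreeGroup.lift ![sanovA, sanovB]) := by
  classical
  obtain ⟨hs0, hs1⟩ := sanov_sqrt2_facts
  apply FreeGroup.injective_lift_of_ping_pong ![sanovA, sanovB] sanovX sanovY
  · -- nonempty
    intro i
    have hhalf : Irrational (Real.sqrt 2 / 2) := by
      have := irrational_sqrt_two.div_natCast (m := 2) (by norm_num)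
      simpa using this
    fin_cases i
    · refine ⟨⟨![Real.sqrt 2, 1], by simpa using irrational_sqrt_two⟩, ?_, ?_⟩
      · show |(1:ℝ)| < |Real.sqrt 2|
        rw [abs_of_pos hs0, abs_one]; exact hs1
      · show (0:ℝ) < Real.sqrt 2 * 1
        nlinarith
    · refine ⟨⟨![-1, Real.sqrt 2], ?_⟩, ?_, ?_⟩
      · show Irrational ((-1 : ℝ) / Real.sqrt 2)
        have heq : (-1 : ℝ) / Real.sqrt 2 = -(Real.sqrt 2 / 2) := by
          rw [div_eq_iff (ne_of_gt hs0)]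
          nlinarith [Real.sq_sqrt (by norm_num : (0:ℝ) ≤ 2)]
        rw [heq]
        exact hhalf.neg
      · show |(-1:ℝ)| < |Real.sqrt 2|
        rw [abs_of_pos hs0, abs_neg, abs_one]; exact hs1
      · show (-1 : ℝ) * Real.sqrt 2 < 0
        nlinarith
  · -- X pairwise disjoint
    intro i j hij
    fin_cases i <;> fin_cases j
    · exact absurd rfl hij
    · show Disjoint (sanovX 0) (sanovX 1)
      refine Set.disjoint_left.mpr ?_
      rintro v ⟨h1, h2⟩ ⟨h3, h4⟩
      linarith
    · show Disjoint (sanovX 1) (sanovX 0)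
      refine Set.disjoint_left.mpr ?_
      rintro v ⟨h1, h2⟩ ⟨h3, h4⟩
      linarith
    · exact absurd rfl hij
  · -- Y pairwise disjoint
    intro i j hij
    fin_cases i <;> fin_cases j
    · exact absurd rfl hij
    · show Disjoint (sanovY 0) (sanovY 1)
      refine Set.disjoint_left.mpr ?_
      rintro v ⟨h1, h2⟩ ⟨h3, h4⟩
      linarith
    · show Disjoint (sanovY 1) (sanovY 0)
      refine Set.disjoint_left.mpr ?_
      rintro v ⟨h1, h2⟩ ⟨h3, h4⟩
      linarith
    · exact absurd rfl hij
  · -- X and Y disjoint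
    intro i j
    fin_cases i <;> fin_cases j
    · show Disjoint (sanovX 0) (sanovY 0)
      refine Set.disjoint_left.mpr ?_
      rintro v ⟨h1, h2⟩ ⟨h3, h4⟩
      linarith
    · show Disjoint (sanovX 0) (sanovY 1)
      refine Set.disjoint_left.mpr ?_
      rintro v ⟨h1, h2⟩ ⟨h3, h4⟩
      linarith
    · show Disjoint (sanovX 1) (sanovY 0)
      refine Set.disjoint_left.mpr ?_
      rintro v ⟨h1, h2⟩ ⟨h3, h4⟩
      linarith
    · show Disjoint (sanovX 1) (sanovY 1)
      refine Set.disjoint_left.mpr ?_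
      rintro v ⟨h1, h2⟩ ⟨h3, h4⟩
      linarith
  · -- a i maps (Y i)ᶜ into X i
    intro i
    fin_cases i
    · rintro u ⟨v, hv, rfl⟩
      obtain ⟨hy, hx, h1, h2⟩ := sanov_basic v
      simp only [sanovY, Set.mem_compl_iff, Matrix.cons_val_zero, Set.mem_setOf_eq] at hv
      have key := sanov_keyA (v.1 0) (v.1 1) hy h1 h2 (by tauto)
      show (sanovA • v) ∈ sanovX 0
      simp only [sanovX, Matrix.cons_val_zero, Set.mem_setOf_eq, sanov_smulA,
        Matrix.cons_val_one, Matrix.head_cons]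
      exact key
    · rintro u ⟨v, hv, rfl⟩
      obtain ⟨hy, hx, h1, h2⟩ := sanov_basic v
      simp only [sanovY, Set.mem_compl_iff, Matrix.cons_val_one, Matrix.head_cons,
        Set.mem_setOf_eq] at hv
      have key := sanov_keyA (v.1 1) (-v.1 0) (neg_ne_zero.mpr hx)
        (by intro h; exact h2 (by linarith)) (by intro h; exact h1 (by linarith))
        (by rw [abs_neg]; intro ⟨ha, hb⟩; exact hv ⟨ha, by nlinarith⟩)
      show (sanovB • v) ∈ sanovX 1
      simp only [sanovX, Matrix.cons_val_one, Matrix.head_cons, Set.mem_setOf_eq, sanov_smulB,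
        Matrix.cons_val_zero]
      rw [abs_neg] at key
      constructor
      · rw [show v.1 1 - 2 * v.1 0 = v.1 1 + 2 * -v.1 0 by ring]
        exact key.1
      · nlinarith [key.2]
  · -- (a i)⁻¹ maps (X i)ᶜ into Y i
    intro i
    fin_cases i
    · rintro u ⟨v, hv, rfl⟩
      obtain ⟨hy, hx, h1, h2⟩ := sanov_basic v
      simp only [sanovX, Set.mem_compl_iff, Matrix.cons_val_zero, Set.mem_setOf_eq] at hv
      have key := sanov_keyA (v.1 0) (-v.1 1) (neg_ne_zero.mpr hy)
        (by intro h; exact h2 (by linarith)) (by intro h; exact h1 (by linarith))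
        (by rw [abs_neg]; intro ⟨ha, hb⟩; exact hv ⟨ha, by nlinarith⟩)
      show ((![sanovA, sanovB])⁻¹ 0 • v) ∈ sanovY 0
      rw [show (![sanovA, sanovB])⁻¹ 0 = sanovA⁻¹ by simp [Pi.inv_apply]]
      simp only [sanovY, Matrix.cons_val_zero, Set.mem_setOf_eq, sanov_smulA_inv,
        Matrix.cons_val_one, Matrix.head_cons]
      rw [abs_neg] at key
      constructor
      · rw [show v.1 0 - 2 * v.1 1 = v.1 0 + 2 * -v.1 1 by ring]
        exact key.1
      · nlinarith [key.2]
    · rintro u ⟨v, hv, rfl⟩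
      obtain ⟨hy, hx, h1, h2⟩ := sanov_basic v
      simp only [sanovX, Set.mem_compl_iff, Matrix.cons_val_one, Matrix.head_cons,
        Set.mem_setOf_eq] at hv
      have key := sanov_keyA (v.1 1) (v.1 0) hx (fun h => h1 h.symm)
        (by intro h; exact h2 (by linarith))
        (by intro ⟨ha, hb⟩; exact hv ⟨ha, by nlinarith⟩)
      show ((![sanovA, sanovB])⁻¹ 1 • v) ∈ sanovY 1
      rw [show (![sanovA, sanovB])⁻¹ 1 = sanovB⁻¹ by simp [Pi.inv_apply]]
      simp only [sanovY, Matrix.cons_val_one, Matrix.head_cons, Set.mem_setOf_eq,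
        sanov_smulB_inv, Matrix.cons_val_zero]
      exact ⟨key.1, by nlinarith [key.2]⟩
end
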